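/- For a geometric random variable N with success parameter p ∈ (0,1] (taking values in {1,2,3,...} with P(N=k)=p(1-p)^{k-1}), the n-th moment satisfies E(N^n) ≤ n!/p^n for every n ≥ 1. -/

import Mathlib

lemma pow_le_descFactorial_aux (k n : ℕ) : (k + 1) ^ n ≤ (k + n).descFactorial n := by
  induction n with
  | zero => simp
  | succ n ih =>
    have h1 : (k + (n + 1)).descFactorial (n + 1) = (k + 1) * (k + n + 1).descFactorial n := by
      rw [Nat.descFactorial_succ]
      congr 1
      omega
    rw [pow_succ, h1, mul_comm]
    exact Nat.mul_le_mul_left _ (ih.trans (Nat.descFactorial_le n (by omega)))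

/-- For a geometric random variable `N` on `{1,2,...}` with `P(N=k) = p(1-p)^{k-1}`,
the `n`-th moment satisfies `E(N^n) ≤ n!/p^n`. Here the moment is written as
`∑' k : ℕ, (k+1)^n * p * (1-p)^k`. -/
theorem geometric_moment_le (p : ℝ) (hp : 0 < p) (hp1 : p ≤ 1) (n : ℕ) (hn : 1 ≤ n) :
    (∑' k : ℕ, ((k + 1 : ℝ)) ^ n * p * (1 - p) ^ k) ≤ (n.factorial : ℝ) / p ^ n := by
  set q : ℝ := 1 - p with hq
  have hq0 : 0 ≤ q := by simp [hq]; linarith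
  have hq1 : ‖q‖ < 1 := by rw [Real.norm_eq_abs, abs_of_nonneg hq0]; simp [hq]; linarith
  have hsum : Summable (fun k : ℕ ↦ ((k + n).choose n : ℝ) * q ^ k) :=
    summable_choose_mul_geometric_of_norm_lt_one n hq1
  have hsum2 : Summable (fun k : ℕ ↦ ((n.factorial : ℝ) * ((k + n).choose n : ℝ)) * p * q ^ k) := by
    have := (hsum.mul_left ((n.factorial : ℝ) * p))
    refine this.congr fun k => ?_
    ring
  have hle : ∀ k : ℕ, ((k + 1 : ℝ)) ^ n * p * q ^ k ≤
      ((n.factorial : ℝ) * ((k + n).choose n : ℝ)) * p * q ^ k := by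
    intro k
    have h1 : ((k + 1 : ℝ)) ^ n ≤ (n.factorial : ℝ) * ((k + n).choose n : ℝ) := by
      have := pow_le_descFactorial_aux k n
      rw [Nat.descFactorial_eq_factorial_mul_choose] at this
      calc ((k + 1 : ℝ)) ^ n = (((k + 1) ^ n : ℕ) : ℝ) := by push_cast; ring
        _ ≤ ((n.factorial * (k + n).choose n : ℕ) : ℝ) := by exact_mod_cast this
        _ = _ := by push_cast; ring
    have := mul_le_mul_of_nonneg_right h1 (le_of_lt hp)
    exact mul_le_mul_of_nonneg_right this (pow_nonneg hq0 k)
  have hsum1 : Summable (fun k : ℕ ↦ ((k + 1 : ℝ)) ^ n * p * q ^ k) := by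
    apply Summable.of_nonneg_of_le (fun k ↦ by positivity) hle hsum2
  calc (∑' k : ℕ, ((k + 1 : ℝ)) ^ n * p * q ^ k)
      ≤ ∑' k : ℕ, ((n.factorial : ℝ) * ((k + n).choose n : ℝ)) * p * q ^ k :=
        Summable.tsum_le_tsum hle hsum1 hsum2
    _ = (n.factorial : ℝ) * p * ∑' k : ℕ, ((k + n).choose n : ℝ) * q ^ k := by
        rw [← tsum_mul_left]; congr 1; ext k; ring
    _ = (n.factorial : ℝ) * p * (1 / (1 - q) ^ (n + 1)) := by
        rw [tsum_choose_mul_geometric_of_norm_lt_one n hq1]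
    _ = (n.factorial : ℝ) / p ^ n := by
        have : (1 : ℝ) - q = p := by simp [hq]
        rw [this]
        field_simp
        ring
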